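/- Let G be a nonabelian finite 2-group in which the number of subgroups not in CD(G) is at most 6. Then G itself belongs to CD(G). -/

import Mathlib

noncomputable def mCD {G : Type*} [Group G] (H : Subgroup G) : ℕ :=
  Nat.card H * Nat.card (Subgroup.centralizer (H : Set G))

noncomputable def mStar (G : Type*) [Group G] : ℕ :=
  sSup (Set.range fun H : Subgroup G => mCD H)

noncomputable def CD (G : Type*) [Group G] : Set (Subgroup G) :=
  {H | mCD H = mStar G}

noncomputable def deltaCD (G : Type*) [Group G] : ℕ :=
  Nat.card {H : Subgroup G // H ∉ CD G}

open Subgroup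

section CDaux

set_option linter.unusedSectionVars false

variable {G : Type*} [Group G] [Finite G]

lemma CDaux.mCD_le_mStar (H : Subgroup G) : mCD H ≤ mStar G :=
  le_csSup (Set.finite_range _).bddAbove ⟨H, rfl⟩

lemma CDaux.exists_mem_CD : ∃ M : Subgroup G, M ∈ CD G := by
  have h : mStar G ∈ Set.range fun H : Subgroup G => mCD H :=
    (Set.range_nonempty _).csSup_mem (Set.finite_range _)
  obtain ⟨M, hM⟩ := h
  exact ⟨M, hM⟩

lemma CDaux.le_cc (H : Subgroup G) :
    H ≤ centralizer ((centralizer (H : Set G) : Subgroup G) : Set G) :=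
  le_centralizer_iff.mpr le_rfl

lemma CDaux.card_mul_relindex {A B : Subgroup G} (h : A ≤ B) :
    Nat.card A * A.relIndex B = Nat.card B := by
  have e : Nat.card (A.subgroupOf B) = Nat.card A :=
    Nat.card_congr (subgroupOfEquivOfLe h).toEquiv
  rw [← e]
  exact Subgroup.card_mul_index (A.subgroupOf B)

lemma CDaux.card_mul_card_le (H K : Subgroup G) :
    Nat.card H * Nat.card K ≤ Nat.card ↥(H ⊔ K) * Nat.card ↥(H ⊓ K) := by
  have h1 : Nat.card ↥(H ⊓ K) * (H ⊓ K).relIndex H = Nat.card H :=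
    CDaux.card_mul_relindex inf_le_left
  have h2 : (H ⊓ K).relIndex H = K.relIndex H := inf_relIndex_left H K
  have h3 : K.relIndex H ≤ K.relIndex (H ⊔ K) := by
    apply relIndex_le_of_le_right le_sup_left
    show (K.subgroupOf (H ⊔ K)).index ≠ 0
    exact Subgroup.index_ne_zero_of_finite
  have h4 : Nat.card K * K.relIndex (H ⊔ K) = Nat.card ↥(H ⊔ K) :=
    CDaux.card_mul_relindex le_sup_right
  calc Nat.card H * Nat.card K
      = (Nat.card ↥(H ⊓ K) * K.relIndex H) * Nat.card K := by rw [← h1, h2]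
    _ ≤ (Nat.card ↥(H ⊓ K) * K.relIndex (H ⊔ K)) * Nat.card K :=
        Nat.mul_le_mul_right _ (Nat.mul_le_mul_left _ h3)
    _ = (Nat.card K * K.relIndex (H ⊔ K)) * Nat.card ↥(H ⊓ K) := by ring
    _ = Nat.card ↥(H ⊔ K) * Nat.card ↥(H ⊓ K) := by rw [h4]

lemma CDaux.centralizer_sup (H K : Subgroup G) :
    centralizer ((H ⊔ K : Subgroup G) : Set G)
      = centralizer (H : Set G) ⊓ centralizer (K : Set G) := by
  apply le_antisymm
  · exact le_inf (centralizer_le (SetLike.coe_subset_coe.mpr le_sup_left))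
      (centralizer_le (SetLike.coe_subset_coe.mpr le_sup_right))
  · rw [Subgroup.le_centralizer_iff]
    apply sup_le
    · exact (CDaux.le_cc H).trans
        (centralizer_le (SetLike.coe_subset_coe.mpr inf_le_left))
    · exact (CDaux.le_cc K).trans
        (centralizer_le (SetLike.coe_subset_coe.mpr inf_le_right))

lemma CDaux.CD_centralizer {H : Subgroup G} (h : H ∈ CD G) :
    centralizer (H : Set G) ∈ CD G ∧
      (centralizer ((centralizer (H : Set G) : Subgroup G) : Set G)) = H := by
  set C1 := centralizer (H : Set G) with hC1
  set C2 := centralizer ((C1 : Subgroup G) : Set G) with hC2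
  have hle : H ≤ C2 := CDaux.le_cc H
  have h1 : mCD C1 ≤ mStar G := CDaux.mCD_le_mStar C1
  have hst : Nat.card H * Nat.card C1 = mStar G := h
  have h4 : Nat.card C1 * Nat.card C2 ≤ Nat.card H * Nat.card C1 := by
    rw [hst]; exact h1
  have h5 : Nat.card C2 ≤ Nat.card H :=
    Nat.le_of_mul_le_mul_left (h4.trans_eq (mul_comm _ _)) Nat.card_pos
  have heq : C2 = H := (Subgroup.eq_of_le_of_card_ge hle h5).symm
  refine ⟨?_, heq⟩
  show Nat.card C1 * Nat.card C2 = mStar G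
  rw [heq, ← hst, mul_comm]

lemma CDaux.sup_mem_CD {H K : Subgroup G} (hH : H ∈ CD G) (hK : K ∈ CD G) :
    H ⊔ K ∈ CD G := by
  have hH' : mCD H = mStar G := hH
  have hK' : mCD K = mStar G := hK
  have hpos : 0 < mStar G := by
    rw [← hH']; exact Nat.mul_pos Nat.card_pos Nat.card_pos
  have key : mStar G * mStar G ≤ mCD (H ⊔ K) * mStar G := by
    have e1 : Nat.card H * Nat.card K ≤ Nat.card ↥(H ⊔ K) * Nat.card ↥(H ⊓ K) :=
      CDaux.card_mul_card_le H K
    have e2 : Nat.card (centralizer (H : Set G)) * Nat.card (centralizer (K : Set G)) ≤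
        Nat.card ↥(centralizer (H : Set G) ⊔ centralizer (K : Set G)) *
          Nat.card ↥(centralizer (H : Set G) ⊓ centralizer (K : Set G)) :=
      CDaux.card_mul_card_le _ _
    have e3 : centralizer (H : Set G) ⊓ centralizer (K : Set G)
        = centralizer ((H ⊔ K : Subgroup G) : Set G) := (CDaux.centralizer_sup H K).symm
    have e4 : centralizer (H : Set G) ⊔ centralizer (K : Set G) ≤
        centralizer ((H ⊓ K : Subgroup G) : Set G) := by
      apply sup_le
      · exact centralizer_le (SetLike.coe_subset_coe.mpr inf_le_left)
      · exact centralizer_le (SetLike.coe_subset_coe.mpr inf_le_right)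
    have e5 : Nat.card ↥(centralizer (H : Set G) ⊔ centralizer (K : Set G)) ≤
        Nat.card (centralizer ((H ⊓ K : Subgroup G) : Set G)) :=
      Subgroup.card_le_of_le e4
    rw [e3] at e2
    calc mStar G * mStar G = mCD H * mCD K := by rw [hH', hK']
      _ = (Nat.card H * Nat.card K) *
          (Nat.card (centralizer (H : Set G)) * Nat.card (centralizer (K : Set G))) := by
            show (Nat.card H * Nat.card (centralizer (H : Set G))) *
              (Nat.card K * Nat.card (centralizer (K : Set G))) = _
            ring
      _ ≤ (Nat.card ↥(H ⊔ K) * Nat.card ↥(H ⊓ K)) *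
          (Nat.card ↥(centralizer (H : Set G) ⊔ centralizer (K : Set G)) *
            Nat.card (centralizer ((H ⊔ K : Subgroup G) : Set G))) :=
            Nat.mul_le_mul e1 e2
      _ ≤ (Nat.card ↥(H ⊔ K) * Nat.card ↥(H ⊓ K)) *
          (Nat.card (centralizer ((H ⊓ K : Subgroup G) : Set G)) *
            Nat.card (centralizer ((H ⊔ K : Subgroup G) : Set G))) := by
            exact Nat.mul_le_mul_left _ (Nat.mul_le_mul_right _ e5)
      _ = mCD (H ⊔ K) * mCD (H ⊓ K) := by
            show _ = (Nat.card ↥(H ⊔ K) * Nat.card (centralizer ((H ⊔ K : Subgroup G) : Set G))) *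
              (Nat.card ↥(H ⊓ K) * Nat.card (centralizer ((H ⊓ K : Subgroup G) : Set G)))
            ring
      _ ≤ mCD (H ⊔ K) * mStar G :=
            Nat.mul_le_mul_left _ (CDaux.mCD_le_mStar _)
  have : mStar G ≤ mCD (H ⊔ K) := Nat.le_of_mul_le_mul_right key hpos
  exact le_antisymm (CDaux.mCD_le_mStar _) this

lemma CDaux.CD_sandwich : ∃ M : Subgroup G, M ∈ CD G ∧ centralizer (M : Set G) ∈ CD G ∧
    ∀ H ∈ CD G, centralizer (M : Set G) ≤ H ∧ H ≤ M := by
  obtain ⟨M₀, hM₀⟩ := CDaux.exists_mem_CD (G := G)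
  obtain ⟨M, hM, hmax⟩ := Set.Finite.exists_maximalFor
    (fun H : Subgroup G => Nat.card H) (CD G) (Set.toFinite _) ⟨M₀, hM₀⟩
  have hle : ∀ H ∈ CD G, H ≤ M := by
    intro H hH
    have hs : H ⊔ M ∈ CD G := CDaux.sup_mem_CD hH hM
    have h1 : Nat.card M ≤ Nat.card ↥(H ⊔ M) := Subgroup.card_le_of_le le_sup_right
    have h2 : Nat.card M = Nat.card ↥(H ⊔ M) := le_antisymm h1 (hmax hs h1)
    have h3 : M = H ⊔ M := Subgroup.eq_of_le_of_card_ge le_sup_right h2.ge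
    exact le_sup_left.trans h3.ge
  obtain ⟨hC, hCC⟩ := CDaux.CD_centralizer hM
  refine ⟨M, hM, hC, fun H hH => ⟨?_, hle H hH⟩⟩
  obtain ⟨hCH, hCCH⟩ := CDaux.CD_centralizer hH
  have h1 : centralizer (H : Set G) ≤ M := hle _ hCH
  have h2 : centralizer (M : Set G) ≤
      centralizer ((centralizer (H : Set G) : Subgroup G) : Set G) :=
    centralizer_le (SetLike.coe_subset_coe.mpr h1)
  rwa [hCCH] at h2

end CDaux

section Max2

set_option linter.unusedSectionVars false

variable {G : Type*} [Group G] [Finite G]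

lemma CDaux.coatom_normal_index_two (hG : IsPGroup 2 G) {H : Subgroup G} (hco : IsCoatom H) :
    H.Normal ∧ H.index = 2 := by
  haveI : Fact (Nat.Prime 2) := ⟨Nat.prime_two⟩
  haveI hnil : Group.IsNilpotent G := hG.isNilpotent
  have hnorm : H.Normal := Subgroup.NormalizerCondition.normal_of_coatom H (normalizerCondition_of_isNilpotent (G := G)) hco
  haveI := hnorm
  refine ⟨hnorm, ?_⟩
  have h0 : H.index ≠ 0 := Subgroup.index_ne_zero_of_finite
  have h1 : H.index ≠ 1 := fun h => hco.1 (Subgroup.index_eq_one.mp h)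
  have hQ : IsPGroup 2 (G ⧸ H) := hG.to_quotient H
  by_contra hne
  have hcard : Nat.card (G ⧸ H) = H.index := (Subgroup.index_eq_card H).symm
  have h4 : 4 ≤ Nat.card (G ⧸ H) := by
    obtain ⟨t, ht⟩ := IsPGroup.iff_card.mp hQ
    rw [hcard] at ht
    rcases t with _ | _ | t
    · rw [pow_zero] at ht; exact absurd ht h1
    · rw [pow_one] at ht; exact absurd ht hne
    · rw [hcard, ht]
      calc (4 : ℕ) = 2 ^ 2 := by norm_num
        _ ≤ 2 ^ (t + 1 + 1) := Nat.pow_le_pow_right (by norm_num) (by omega)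
  obtain ⟨S, hS⟩ := Sylow.exists_subgroup_card_pow_prime_of_le_card Nat.prime_two hQ
    (show 2 ^ 1 ≤ Nat.card (G ⧸ H) by omega)
  rw [pow_one] at hS
  set π := QuotientGroup.mk' H with hπ
  set K := S.comap π with hK
  have hHK : H ≤ K := by
    have : π.ker ≤ K := Subgroup.comap_mono (bot_le : ⊥ ≤ S)
    rwa [QuotientGroup.ker_mk'] at this
  have hmapK : K.map π = S := Subgroup.map_comap_eq_self_of_surjective
    (QuotientGroup.mk'_surjective H) S
  have hKne : K ≠ H := by
    intro h
    rw [h] at hmapK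
    have : S ≤ ⊥ := by
      rw [← hmapK]
      rintro x ⟨y, hy, rfl⟩
      simp only [Subgroup.mem_bot]
      exact (QuotientGroup.eq_one_iff y).mpr hy
    have : Nat.card S ≤ 1 := by
      calc Nat.card S ≤ Nat.card (⊥ : Subgroup (G ⧸ H)) := Subgroup.card_le_of_le this
        _ = 1 := Subgroup.card_bot
    omega
  have hKtop : K = ⊤ := hco.2 K (lt_of_le_of_ne hHK (Ne.symm hKne))
  rw [hKtop] at hmapK
  have : S = ⊤ := by
    rw [← hmapK]
    rw [← MonoidHom.range_eq_map]
    exact MonoidHom.range_eq_top_of_surjective π (QuotientGroup.mk'_surjective H)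
  rw [this, Subgroup.card_top] at hS
  omega

lemma CDaux.proper_le_index_two (hG : IsPGroup 2 G) {H : Subgroup G} (h : H ≠ ⊤) :
    ∃ A : Subgroup G, H ≤ A ∧ A.index = 2 ∧ A.Normal := by
  rcases eq_top_or_exists_le_coatom H with h' | ⟨A, hA, hle⟩
  · exact absurd h' h
  · obtain ⟨hn, hi⟩ := CDaux.coatom_normal_index_two hG hA
    exact ⟨A, hle, hi, hn⟩

lemma CDaux.eq_of_le_index_two {A B : Subgroup G} (hA : A.index = 2) (hB : B.index = 2)
    (h : A ≤ B) : A = B := by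
  have c1 := Subgroup.card_mul_index A
  have c2 := Subgroup.card_mul_index B
  rw [hA] at c1; rw [hB] at c2
  exact Subgroup.eq_of_le_of_card_ge h (by omega)

lemma CDaux.isCoatom_of_index_two {H : Subgroup G} (h : H.index = 2) : IsCoatom H := by
  constructor
  · intro ht; rw [ht, Subgroup.index_top] at h; omega
  · intro K hK
    have hdvd : K.index ∣ H.index := Subgroup.index_dvd_of_le hK.le
    rw [h] at hdvd
    rcases (Nat.prime_two).eq_one_or_self_of_dvd _ hdvd with h1 | h2
    · exact Subgroup.index_eq_one.mp h1
    · exact absurd (CDaux.eq_of_le_index_two h h2 hK.le).symm hK.ne'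

lemma CDaux.exists_three_index_two (hG : IsPGroup 2 G) (hnc : ¬ IsCyclic G) [Nontrivial G] :
    ∃ A B C : Subgroup G, A.index = 2 ∧ B.index = 2 ∧ C.index = 2 ∧
      A ≠ B ∧ A ≠ C ∧ B ≠ C := by
  haveI : Fact (Nat.Prime 2) := ⟨Nat.prime_two⟩
  obtain ⟨A, -, hA2, hAn⟩ := CDaux.proper_le_index_two hG (H := ⊥) bot_ne_top
  have hex : ∃ B : Subgroup G, B.index = 2 ∧ B ≠ A := by
    by_contra hB
    push_neg at hB
    have hall : ∀ x : G, x ∈ A := by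
      intro x
      by_cases hx : Subgroup.zpowers x = ⊤
      · exact absurd ⟨⟨x, (Subgroup.eq_top_iff' _).mp hx⟩⟩ hnc
      · obtain ⟨B, hxB, hB2, -⟩ := CDaux.proper_le_index_two hG hx
        rw [hB B hB2] at hxB
        exact hxB (Subgroup.mem_zpowers x)
    have hAtop : A = ⊤ := by
      rw [Subgroup.eq_top_iff']; exact hall
    rw [hAtop, Subgroup.index_top] at hA2; omega
  obtain ⟨B, hB2, hBA⟩ := hex
  haveI hBn : B.Normal := (CDaux.coatom_normal_index_two hG
    (CDaux.isCoatom_of_index_two hB2)).1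
  set N := A ⊓ B with hN
  haveI hNn : N.Normal := Subgroup.normal_inf_normal A B
  have hnAB : ¬ A ≤ B := fun hle => hBA.symm (CDaux.eq_of_le_index_two hA2 hB2 hle)
  have hnBA : ¬ B ≤ A := fun hle => hBA (CDaux.eq_of_le_index_two hB2 hA2 hle)
  obtain ⟨a, haA, haB⟩ := SetLike.not_le_iff_exists.mp hnAB
  obtain ⟨b, hbB, hbA⟩ := SetLike.not_le_iff_exists.mp hnBA
  set π := QuotientGroup.mk' N with hπ
  set z := π (a * b) with hz
  have hzne : z ≠ 1 := by
    intro h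
    have hab : a * b ∈ N := (QuotientGroup.eq_one_iff (a * b)).mp h
    have : a * b ∈ B := hab.2
    exact haB ((mul_mem_cancel_right hbB).mp this)
  have hsqA : (a * b) ^ 2 ∈ A := by rw [← hA2]; exact Subgroup.pow_index_mem A (a * b)
  have hsqB : (a * b) ^ 2 ∈ B := by rw [← hB2]; exact Subgroup.pow_index_mem B (a * b)
  have hz2 : z ^ 2 = 1 := by
    rw [hz, ← map_pow]
    exact (QuotientGroup.eq_one_iff _).mpr ⟨hsqA, hsqB⟩
  have horder : orderOf z = 2 := orderOf_eq_prime hz2 hzne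
  have hczp : Nat.card (Subgroup.zpowers z) = 2 := by rw [Nat.card_zpowers, horder]
  have hrel : N.relIndex A = 2 := by
    have h1 : (A ⊓ B).relIndex A = B.relIndex A := inf_relIndex_left A B
    have hdvd : B.relIndex A ∣ B.index := Subgroup.relIndex_dvd_index_of_normal B A
    rw [hB2] at hdvd
    rcases Nat.prime_two.eq_one_or_self_of_dvd _ hdvd with h | h
    · exact absurd (CDaux.eq_of_le_index_two hA2 hB2 (Subgroup.relIndex_eq_one.mp h)) hBA.symm
    · rw [hN, h1, h]
  have hNindex : N.index = 4 := by
    have h1 := Subgroup.relIndex_mul_index (inf_le_left : N ≤ A)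
    rw [hrel, hA2] at h1
    exact h1.symm
  set C := (Subgroup.zpowers z).comap π with hC
  have hCi : C.index = 2 := by
    have h1 : C.index = (Subgroup.zpowers z).relIndex π.range := Subgroup.index_comap _ π
    rw [MonoidHom.range_eq_top_of_surjective π (QuotientGroup.mk'_surjective N),
      Subgroup.relIndex_top_right] at h1
    have h2 := Subgroup.card_mul_index (Subgroup.zpowers z)
    rw [hczp, ← Subgroup.index_eq_card, hNindex] at h2
    omega
  have habC : a * b ∈ C := Subgroup.mem_comap.mpr (Subgroup.mem_zpowers z)
  have hCA : C ≠ A := by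
    intro h
    rw [h] at habC
    exact hbA ((mul_mem_cancel_left haA).mp habC)
  have hCB : C ≠ B := by
    intro h
    rw [h] at habC
    exact haB ((mul_mem_cancel_right hbB).mp habC)
  exact ⟨A, B, C, hA2, hB2, hCi, hBA.symm, hCA.symm, hCB.symm⟩

lemma CDaux.center_big (hG : IsPGroup 2 G) {K1 K2 : Subgroup G}
    (h1 : Nat.card K1 = 2) (h2 : Nat.card K2 = 4)
    (hu2 : ∀ X : Subgroup G, Nat.card X = 2 → X = K1)
    (hu4 : ∀ X : Subgroup G, Nat.card X = 4 → X = K2) :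
    4 ≤ Nat.card (Subgroup.center G) := by
  haveI : Fact (Nat.Prime 2) := ⟨Nat.prime_two⟩
  have hx4 : ∃ g ∈ K2, orderOf g = 4 := by
    by_contra hc
    push_neg at hc
    have hsq : ∀ x ∈ K2, x ^ 2 = 1 := by
      intro x hx
      have hpow : x ^ 4 = 1 := by
        have hp : (⟨x, hx⟩ : K2) ^ 4 = 1 := by
          rw [← h2]; exact pow_card_eq_one'
        have := congrArg (Subtype.val) hp
        simpa using this
      have hdvd : orderOf x ∣ 4 := orderOf_dvd_of_pow_eq_one hpow
      have hne : orderOf x ≠ 4 := hc x hx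
      have : orderOf x ∣ 2 := by
        rcases (Nat.dvd_prime_pow Nat.prime_two).mp (show orderOf x ∣ 2 ^ 2 from hdvd) with
          ⟨i, hi, hoi⟩
        interval_cases i
        · rw [hoi]; exact one_dvd 2
        · rw [hoi]; norm_num
        · exact absurd hoi hne
      exact orderOf_dvd_iff_pow_eq_one.mp this
    have hnle : ¬ K2 ≤ K1 := by
      intro hle
      have := Subgroup.card_le_of_le hle
      omega
    obtain ⟨u, huK, huK1⟩ := SetLike.not_le_iff_exists.mp hnle
    have hune : u ≠ 1 := fun h => huK1 (h ▸ K1.one_mem)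
    have huo : orderOf u = 2 := orderOf_eq_prime (hsq u huK) hune
    have : Subgroup.zpowers u = K1 := hu2 _ (by rw [Nat.card_zpowers, huo])
    exact huK1 (this ▸ Subgroup.mem_zpowers u)
  obtain ⟨g, hgK, hg4⟩ := hx4
  have hzg : Subgroup.zpowers g = K2 := by
    apply Subgroup.eq_of_le_of_card_ge (Subgroup.zpowers_le.mpr hgK)
    rw [Nat.card_zpowers, hg4, h2]
  have hg2 : orderOf (g ^ 2) = 2 := by
    rw [orderOf_pow, hg4]
    norm_num
  have hK1 : Subgroup.zpowers (g ^ 2) = K1 := hu2 _ (by rw [Nat.card_zpowers, hg2])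
  have hcomm : ∀ x : G, Commute x g := by
    intro x
    obtain ⟨n, hn⟩ := hG x
    obtain ⟨r, hr_le, hr⟩ := (Nat.dvd_prime_pow Nat.prime_two).mp
      (orderOf_dvd_of_pow_eq_one hn)
    rcases Nat.lt_or_ge r 2 with hr2 | hr2
    · interval_cases r
      · have hx1 : x = 1 := orderOf_eq_one_iff.mp (by rw [hr, pow_zero])
        rw [hx1]; exact Commute.one_left g
      · have hzx : Subgroup.zpowers x = K1 := hu2 _ (by rw [Nat.card_zpowers, hr, pow_one])
        have hxmem : x ∈ Subgroup.zpowers (g ^ 2) := by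
          rw [hK1, ← hzx]; exact Subgroup.mem_zpowers x
        obtain ⟨k, hk⟩ := Subgroup.mem_zpowers_iff.mp hxmem
        rw [← hk]
        exact ((Commute.refl g).pow_left 2).zpow_left k
    · set y := x ^ (2 ^ (r - 2)) with hy
      have hyo : orderOf y = 4 := by
        rw [hy, orderOf_pow, hr]
        rw [Nat.gcd_eq_right (pow_dvd_pow 2 (by omega))]
        rw [Nat.pow_div (by omega) (by norm_num)]
        rw [show r - (r - 2) = 2 by omega]
      have hzy : Subgroup.zpowers y = K2 := hu4 _ (by rw [Nat.card_zpowers, hyo])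
      have hg_mem : g ∈ Subgroup.zpowers y := by
        rw [hzy, ← hzg]; exact Subgroup.mem_zpowers g
      obtain ⟨k, hk⟩ := Subgroup.mem_zpowers_iff.mp hg_mem
      rw [← hk, hy]
      exact ((Commute.refl x).pow_right _).zpow_right k
  have hcent : Subgroup.zpowers g ≤ Subgroup.center G :=
    Subgroup.zpowers_le.mpr (Subgroup.mem_center_iff.mpr (fun b => hcomm b))
  calc (4 : ℕ) = Nat.card (Subgroup.zpowers g) := by rw [Nat.card_zpowers, hg4]
    _ ≤ Nat.card (Subgroup.center G) := Subgroup.card_le_of_le hcent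

end Max2

theorem stmt13 {G : Type*} [Group G] [Finite G] (hG : IsPGroup 2 G)
    (hna : ¬ ∀ a b : G, a * b = b * a) (h : deltaCD G ≤ 6) :
    (⊤ : Subgroup G) ∈ CD G := by
  classical
  haveI : Fact (Nat.Prime 2) := ⟨Nat.prime_two⟩
  by_contra hT
  push_neg at hna
  obtain ⟨a0, b0, hab⟩ := hna
  haveI : Nontrivial G := ⟨⟨a0 * b0, b0 * a0, hab⟩⟩
  have hnc : ¬ IsCyclic G := by
    intro hc
    obtain ⟨g, hg⟩ := hc.exists_generator
    obtain ⟨i, hi⟩ := Subgroup.mem_zpowers_iff.mp (hg a0)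
    obtain ⟨j, hj⟩ := Subgroup.mem_zpowers_iff.mp (hg b0)
    rw [← hi, ← hj, ← zpow_add, ← zpow_add, add_comm] at hab
    exact hab rfl
  obtain ⟨M, hM, hmCD, hsand⟩ := CDaux.CD_sandwich (G := G)
  set m := Subgroup.centralizer (M : Set G) with hm
  have hMT : M ≠ ⊤ := fun h' => hT (h' ▸ hM)
  have hlt : mCD (⊤ : Subgroup G) < mStar G :=
    lt_of_le_of_ne (CDaux.mCD_le_mStar ⊤) hT
  have htop : mCD (⊤ : Subgroup G) = Nat.card G * Nat.card (Subgroup.center G) := by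
    show Nat.card (⊤ : Subgroup G) * _ = _
    rw [Subgroup.card_top]
    congr 2
    rw [Subgroup.coe_top, Subgroup.centralizer_univ]
  have hMst : Nat.card M * Nat.card m = mStar G := hM
  have hcG : Nat.card M * M.index = Nat.card G := Subgroup.card_mul_index M
  have hi0 : M.index ≠ 0 := Subgroup.index_ne_zero_of_finite
  have hi1 : M.index ≠ 1 := fun h' => hMT (Subgroup.index_eq_one.mp h')
  have hiM : 2 ≤ M.index := by omega
  have hZ2 : 2 ≤ Nat.card (Subgroup.center G) :=
    Finite.one_lt_card_iff_nontrivial.mpr hG.center_nontrivial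
  have hkey : M.index * Nat.card (Subgroup.center G) < Nat.card m := by
    have h1 : Nat.card G * Nat.card (Subgroup.center G) < Nat.card M * Nat.card m := by
      rw [hMst, ← htop]; exact hlt
    rw [← hcG, mul_assoc] at h1
    exact lt_of_mul_lt_mul_left h1 (Nat.zero_le _)
  have hm4 : 4 < Nat.card m := by
    have h2 : 2 * 2 ≤ M.index * Nat.card (Subgroup.center G) := Nat.mul_le_mul hiM hZ2
    omega
  obtain ⟨am, ham⟩ := IsPGroup.iff_card.mp (hG.to_subgroup m)
  have ham3 : 3 ≤ am := by
    by_contra hc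
    push_neg at hc
    interval_cases am <;> (rw [ham] at hm4; norm_num at hm4)
  have hm8 : 8 ≤ Nat.card m := by
    rw [ham]
    calc (8:ℕ) = 2 ^ 3 := by norm_num
      _ ≤ 2 ^ am := Nat.pow_le_pow_right (by norm_num) ham3
  have hmleM : m ≤ M := (hsand m hmCD).2
  have hmM : Nat.card m ≤ Nat.card M := Subgroup.card_le_of_le hmleM
  have hsmall : ∀ H : Subgroup G, Nat.card H < Nat.card m → H ∉ CD G := by
    intro H hcard hH
    have := Subgroup.card_le_of_le (hsand H hH).1
    omega
  have hmaxnot : ∀ M1 : Subgroup G, M1.index = 2 → M1 ≠ M → M1 ∉ CD G := by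
    intro M1 hi hne hmem
    have hle : M1 ≤ M := (hsand M1 hmem).2
    have hdvd : M.index ∣ M1.index := Subgroup.index_dvd_of_le hle
    rw [hi] at hdvd
    rcases Nat.prime_two.eq_one_or_self_of_dvd _ hdvd with h' | h'
    · exact hMT (Subgroup.index_eq_one.mp h')
    · exact hne (CDaux.eq_of_le_index_two hi h' hle)
  have hcGm : Nat.card m ≤ Nat.card G := by
    calc Nat.card m ≤ Nat.card (⊤ : Subgroup G) := Subgroup.card_le_of_le le_top
      _ = Nat.card G := Subgroup.card_top
  obtain ⟨K1, hK1⟩ := Sylow.exists_subgroup_card_pow_prime_of_le_card Nat.prime_two hG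
    (show 2 ^ 1 ≤ Nat.card G by rw [pow_one]; omega)
  obtain ⟨K2, hK2⟩ := Sylow.exists_subgroup_card_pow_prime_of_le_card Nat.prime_two hG
    (show 2 ^ 2 ≤ Nat.card G by omega)
  rw [pow_one] at hK1
  have hK2' : Nat.card K2 = 4 := by rw [hK2]; norm_num
  set K0 := (⊥ : Subgroup G) with hK0
  have hK0c : Nat.card K0 = 1 := Subgroup.card_bot
  have hX : ∃ X : Subgroup G, X ≠ K0 ∧ X ≠ K1 ∧ X ≠ K2 ∧ Nat.card X < Nat.card m := by
    rcases Nat.lt_or_ge (Nat.card m) 16 with hlt16 | hge16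
    · have hcm8 : Nat.card m = 8 := by
        have ham4 : am = 3 := by
          by_contra hc
          have h4 : 4 ≤ am := by omega
          have h5 : 2 ^ 4 ≤ 2 ^ am := Nat.pow_le_pow_right (by norm_num) h4
          rw [← ham] at h5
          norm_num at h5
          omega
        rw [ham, ham4]; norm_num
      by_cases hmul : (∃ X : Subgroup G, Nat.card X = 2 ∧ X ≠ K1) ∨
          (∃ X : Subgroup G, Nat.card X = 4 ∧ X ≠ K2)
      · rcases hmul with ⟨X, hXc, hXne⟩ | ⟨X, hXc, hXne⟩
        · exact ⟨X, fun h' => by rw [h', hK0c] at hXc; omega, hXne,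
            fun h' => by rw [h', hK2'] at hXc; omega, by omega⟩
        · exact ⟨X, fun h' => by rw [h', hK0c] at hXc; omega,
            fun h' => by rw [h', hK1] at hXc; omega, hXne, by omega⟩
      · push_neg at hmul
        obtain ⟨hu2, hu4⟩ := hmul
        exfalso
        have h4Z := CDaux.center_big hG hK1 hK2' hu2 hu4
        have h8 : 2 * 4 ≤ M.index * Nat.card (Subgroup.center G) :=
          Nat.mul_le_mul hiM h4Z
        omega
    · obtain ⟨K3, hK3⟩ := Sylow.exists_subgroup_card_pow_prime_of_le_card Nat.prime_two hG
        (show 2 ^ 3 ≤ Nat.card G by omega)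
      have hK3c : Nat.card K3 = 8 := by rw [hK3]; norm_num
      exact ⟨K3, fun h' => by rw [h', hK0c] at hK3c; omega,
        fun h' => by rw [h', hK1] at hK3c; omega,
        fun h' => by rw [h', hK2'] at hK3c; omega, by omega⟩
  obtain ⟨X7, hX70, hX71, hX72, hX7lt⟩ := hX
  obtain ⟨A, B, C, hA2, hB2, hC2, hABne, hACne, hBCne⟩ := CDaux.exists_three_index_two hG hnc
  have hpick : ∃ M1 M2 : Subgroup G, M1.index = 2 ∧ M2.index = 2 ∧ M1 ≠ M2 ∧
      M1 ≠ M ∧ M2 ≠ M := by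
    by_cases hA : A = M
    · exact ⟨B, C, hB2, hC2, hBCne, fun h' => hABne (hA.trans h'.symm),
        fun h' => hACne (hA.trans h'.symm)⟩
    · by_cases hB : B = M
      · exact ⟨A, C, hA2, hC2, hACne, hA, fun h' => hBCne (hB.trans h'.symm)⟩
      · exact ⟨A, B, hA2, hB2, hABne, hA, hB⟩
  obtain ⟨M1, M2, hM1i, hM2i, hM12, hM1M, hM2M⟩ := hpick
  have hM1c : Nat.card M1 * 2 = Nat.card G := by
    rw [← hM1i]; exact Subgroup.card_mul_index M1
  have hM2c : Nat.card M2 * 2 = Nat.card G := by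
    rw [← hM2i]; exact Subgroup.card_mul_index M2
  have hM1M2card : Nat.card M2 = Nat.card M1 := by omega
  have hcMq : Nat.card M ≤ Nat.card M1 := by
    have h1 : Nat.card M * 2 ≤ Nat.card M * M.index := Nat.mul_le_mul_left _ hiM
    rw [hcG] at h1
    omega
  have hqlt : Nat.card M1 < Nat.card G := by
    have := Nat.card_pos (α := M1); omega
  have hmq : Nat.card m ≤ Nat.card M1 := le_trans hmM hcMq
  -- non-CD facts
  have hS0 : K0 ∉ CD G := hsmall _ (by omega)
  have hS1 : K1 ∉ CD G := hsmall _ (by omega)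
  have hS2 : K2 ∉ CD G := hsmall _ (by omega)
  have hSX : X7 ∉ CD G := hsmall _ hX7lt
  have hSM1 : M1 ∉ CD G := hmaxnot _ hM1i hM1M
  have hSM2 : M2 ∉ CD G := hmaxnot _ hM2i hM2M
  -- distinctness
  have dcard : ∀ {P Q : Subgroup G}, Nat.card P ≠ Nat.card Q → P ≠ Q :=
    fun h' he => h' (by rw [he])
  have hStop : Nat.card (⊤ : Subgroup G) = Nat.card G := Subgroup.card_top
  have dT1 : (⊤ : Subgroup G) ≠ M1 := dcard (by rw [hStop]; omega)
  have dT2 : (⊤ : Subgroup G) ≠ M2 := dcard (by rw [hStop]; omega)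
  have dT3 : (⊤ : Subgroup G) ≠ X7 := dcard (by rw [hStop]; omega)
  have dT4 : (⊤ : Subgroup G) ≠ K2 := dcard (by rw [hStop]; omega)
  have dT5 : (⊤ : Subgroup G) ≠ K1 := dcard (by rw [hStop]; omega)
  have dT6 : (⊤ : Subgroup G) ≠ K0 := dcard (by rw [hStop]; omega)
  have dM11 : M1 ≠ X7 := dcard (by omega)
  have dM12 : M1 ≠ K2 := dcard (by omega)
  have dM13 : M1 ≠ K1 := dcard (by omega)
  have dM14 : M1 ≠ K0 := dcard (by omega)
  have dM21 : M2 ≠ X7 := dcard (by omega)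
  have dM22 : M2 ≠ K2 := dcard (by omega)
  have dM23 : M2 ≠ K1 := dcard (by omega)
  have dM24 : M2 ≠ K0 := dcard (by omega)
  have dK21 : K2 ≠ K1 := dcard (by omega)
  have dK22 : K2 ≠ K0 := dcard (by omega)
  have dK11 : K1 ≠ K0 := dcard (by omega)
  -- the finset
  have n6 : K1 ∉ ({K0} : Finset (Subgroup G)) := by
    simp only [Finset.mem_singleton]; exact dK11
  have n5 : K2 ∉ insert K1 ({K0} : Finset (Subgroup G)) := by
    simp only [Finset.mem_insert, Finset.mem_singleton]; push_neg
    exact ⟨dK21, dK22⟩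
  have n4 : X7 ∉ insert K2 (insert K1 ({K0} : Finset (Subgroup G))) := by
    simp only [Finset.mem_insert, Finset.mem_singleton]; push_neg
    exact ⟨hX72, hX71, hX70⟩
  have n3 : M2 ∉ insert X7 (insert K2 (insert K1 ({K0} : Finset (Subgroup G)))) := by
    simp only [Finset.mem_insert, Finset.mem_singleton]; push_neg
    exact ⟨dM21, dM22, dM23, dM24⟩
  have n2 : M1 ∉ insert M2 (insert X7 (insert K2 (insert K1 ({K0} : Finset (Subgroup G))))) := by
    simp only [Finset.mem_insert, Finset.mem_singleton]; push_neg
    exact ⟨hM12, dM11, dM12, dM13, dM14⟩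
  have n1 : (⊤ : Subgroup G) ∉
      insert M1 (insert M2 (insert X7 (insert K2 (insert K1 ({K0} : Finset (Subgroup G)))))) := by
    simp only [Finset.mem_insert, Finset.mem_singleton]; push_neg
    exact ⟨dT1, dT2, dT3, dT4, dT5, dT6⟩
  set S : Finset (Subgroup G) :=
    insert ⊤ (insert M1 (insert M2 (insert X7 (insert K2 (insert K1 ({K0} : Finset (Subgroup G)))))))
    with hSdef
  have hScard : S.card = 7 := by
    rw [hSdef, Finset.card_insert_of_notMem n1, Finset.card_insert_of_notMem n2,
      Finset.card_insert_of_notMem n3, Finset.card_insert_of_notMem n4,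
      Finset.card_insert_of_notMem n5, Finset.card_insert_of_notMem n6,
      Finset.card_singleton]
  have hsub : ↑S ⊆ {H : Subgroup G | H ∉ CD G} := by
    intro H hH
    simp only [hSdef, Finset.coe_insert, Set.mem_insert_iff, Finset.coe_singleton,
      Set.mem_singleton_iff] at hH
    rcases hH with rfl | rfl | rfl | rfl | rfl | rfl | rfl
    · exact hT
    · exact hSM1
    · exact hSM2
    · exact hSX
    · exact hS2
    · exact hS1
    · exact hS0
  have hdelta : deltaCD G = ({H : Subgroup G | H ∉ CD G}).ncard :=
    Nat.card_coe_set_eq _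
  have h7 : 7 ≤ deltaCD G := by
    rw [hdelta]
    calc 7 = S.card := hScard.symm
      _ = (↑S : Set (Subgroup G)).ncard := (Set.ncard_coe_finset S).symm
      _ ≤ _ := Set.ncard_le_ncard hsub (Set.toFinite _)
  omega
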